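/- arXiv:2112.05273 — 5 statements merged into one kernel-verified Lean document; each statement's English description precedes it below -/
import Mathlib

section
/- Let f : ℝⁿ → ℝ be differentiable with L-Lipschitz gradient and suppose ‖∇f(x)‖₂ ≤ M for all x. Then g(z) := f(z ⊙ z) has Lipschitz gradient with constant 4L + 2M on the unit sphere; specifically, for all z₁, z₂ with ‖z₁‖₂ = ‖z₂‖₂ = 1, ‖∇g(z₁) − ∇g(z₂)‖₂ ≤ (4L + 2M)‖z₁ − z₂‖₂. -/
noncomputable section

abbrev E (n : ℕ) := EuclideanSpace ℝ (Fin n)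

def mulE {n : ℕ} (x y : E n) : E n := WithLp.toLp 2 (fun i => x i * y i)

lemma mulE_apply {n : ℕ} (x y : E n) (i : Fin n) : mulE x y i = x i * y i := rfl

lemma norm_sq_eq (n : ℕ) (x : E n) : ‖x‖^2 = ∑ j, (x j)^2 := by
  rw [EuclideanSpace.norm_eq, Real.sq_sqrt (by positivity)]
  simp [Real.norm_eq_abs, sq_abs]

lemma coord_sq_le (n : ℕ) (x : E n) (i : Fin n) : (x i)^2 ≤ ‖x‖^2 := by
  rw [norm_sq_eq]
  exact Finset.single_le_sum (f := fun j => (x j)^2) (fun j _ => sq_nonneg _) (Finset.mem_univ i)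

lemma mul_norm_le (n : ℕ) (x y : E n) : ‖mulE x y‖ ≤ ‖x‖ * ‖y‖ := by
  have h1 : ‖mulE x y‖^2 ≤ (‖x‖ * ‖y‖)^2 := by
    rw [norm_sq_eq, mul_pow, norm_sq_eq n y, Finset.mul_sum]
    apply Finset.sum_le_sum
    intro i _
    calc (mulE x y i)^2 = (x i)^2 * (y i)^2 := by rw [mulE_apply]; ring
    _ ≤ ‖x‖^2 * (y i)^2 := mul_le_mul_of_nonneg_right (coord_sq_le n x i) (sq_nonneg _)
  exact le_of_sq_le_sq h1 (by positivity)

lemma sq_hasFDeriv {n : ℕ} (z : E n) :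
    HasFDerivAt (fun z : E n => mulE z z)
      (((EuclideanSpace.equiv (Fin n) ℝ).symm : (Fin n → ℝ) →L[ℝ] E n).comp
        ((ContinuousLinearMap.pi (fun i => (2 * z i) • ContinuousLinearMap.proj (R := ℝ) (φ := fun _ : Fin n => ℝ) i)).comp
          ((EuclideanSpace.equiv (Fin n) ℝ) : E n →L[ℝ] (Fin n → ℝ)))) z := by
  set e := EuclideanSpace.equiv (Fin n) ℝ
  have hh : HasFDerivAt (fun x : Fin n → ℝ => (fun i => x i * x i))
      (ContinuousLinearMap.pi (fun i => (2 * (e z) i) • ContinuousLinearMap.proj (R := ℝ) (φ := fun _ : Fin n => ℝ) i)) (e z) := by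
    apply hasFDerivAt_pi''
    intro i
    have h1 : HasFDerivAt (fun x : Fin n → ℝ => x i) (ContinuousLinearMap.proj (R := ℝ) (φ := fun _ : Fin n => ℝ) i) (e z) :=
      (ContinuousLinearMap.proj (R := ℝ) (φ := fun _ : Fin n => ℝ) i).hasFDerivAt
    have := h1.mul h1
    refine this.congr_fderiv ?_
    ext v
    simp [ContinuousLinearMap.proj_pi]
    ring
  have hcomp := ((e.symm.toContinuousLinearMap.hasFDerivAt).comp (e z) hh).comp z
    (e.toContinuousLinearMap.hasFDerivAt)
  exact hcomp

lemma grad_g {n : ℕ} (f : E n → ℝ) (hf : Differentiable ℝ f)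
    (g : E n → ℝ) (hg : ∀ z, g z = f (mulE z z)) (z : E n) :
    gradient g z = mulE ((2:ℝ) • z) (gradient f (mulE z z)) := by
  set a : E n := gradient f (mulE z z) with ha
  have hfd : HasFDerivAt f (InnerProductSpace.toDual ℝ (E n) a) (mulE z z) :=
    ((hf (mulE z z)).hasGradientAt).hasFDerivAt
  have hgf : g = fun z => f (mulE z z) := funext hg
  have hcomp := HasFDerivAt.comp (f := fun z : E n => mulE z z) z hfd (sq_hasFDeriv z)
  have hgc : HasFDerivAt g _ z := hcomp.congr_of_eventuallyEq (by filter_upwards with w; simp [hg w, Function.comp])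
  have heq : (InnerProductSpace.toDual ℝ (E n) (mulE ((2:ℝ) • z) a)) =
      (InnerProductSpace.toDual ℝ (E n) a).comp
      (((EuclideanSpace.equiv (Fin n) ℝ).symm : (Fin n → ℝ) →L[ℝ] E n).comp
        ((ContinuousLinearMap.pi (fun i => (2 * z i) • ContinuousLinearMap.proj (R := ℝ) (φ := fun _ : Fin n => ℝ) i)).comp
          ((EuclideanSpace.equiv (Fin n) ℝ) : E n →L[ℝ] (Fin n → ℝ)))) := by
    ext v
    simp only [InnerProductSpace.toDual_apply_apply, ContinuousLinearMap.comp_apply,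
      ContinuousLinearMap.coe_coe, PiLp.inner_apply, RCLike.inner_apply, conj_trivial]
    apply Finset.sum_congr rfl
    intro i _
    simp [mulE_apply, PiLp.smul_apply, smul_eq_mul, ContinuousLinearMap.proj_apply]
    ring
  have : HasGradientAt g (mulE ((2:ℝ) • z) a) z := by
    rw [hasGradientAt_iff_hasFDerivAt, heq]
    exact hgc
  exact this.gradient

theorem stmt_5 (n : ℕ) (f : EuclideanSpace ℝ (Fin n) → ℝ) (L M : ℝ)
    (hf : Differentiable ℝ f)
    (hL : ∀ x y, ‖gradient f x - gradient f y‖ ≤ L * ‖x - y‖)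
    (hM : ∀ x, ‖gradient f x‖ ≤ M)
    (g : EuclideanSpace ℝ (Fin n) → ℝ)
    (hg : ∀ z, g z = f (WithLp.toLp 2 (fun i => z i * z i) : EuclideanSpace ℝ (Fin n))) :
    ∀ z₁ z₂ : EuclideanSpace ℝ (Fin n), ‖z₁‖ = 1 → ‖z₂‖ = 1 →
      ‖gradient g z₁ - gradient g z₂‖ ≤ (4 * L + 2 * M) * ‖z₁ - z₂‖ := by
  intro z₁ z₂ h1 h2
  by_cases hzz : z₁ = z₂
  · subst hzz; simp
  have hΔ : (0:ℝ) < ‖z₁ - z₂‖ := by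
    rw [norm_pos_iff]; exact sub_ne_zero_of_ne hzz
  have hL0 : 0 ≤ L := by
    have := hL z₁ z₂
    nlinarith [norm_nonneg (gradient f z₁ - gradient f z₂)]
  have hM0 : 0 ≤ M := le_trans (norm_nonneg _) (hM 0)
  have hg' : ∀ z, g z = f (mulE z z) := hg
  set a₁ : E n := gradient f (mulE z₁ z₁) with ha₁
  set a₂ : E n := gradient f (mulE z₂ z₂) with ha₂
  have hG1 : gradient g z₁ = mulE ((2:ℝ) • z₁) a₁ := grad_g f hf g hg' z₁
  have hG2 : gradient g z₂ = mulE ((2:ℝ) • z₂) a₂ := grad_g f hf g hg' z₂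
  have hkey : mulE ((2:ℝ) • z₁) a₁ - mulE ((2:ℝ) • z₂) a₂ =
      (2:ℝ) • mulE z₁ (a₁ - a₂) + (2:ℝ) • mulE (z₁ - z₂) a₂ := by
    ext i
    simp [mulE_apply, PiLp.sub_apply, PiLp.add_apply, PiLp.smul_apply, smul_eq_mul]
    ring
  have hsqd : mulE z₁ z₁ - mulE z₂ z₂ = mulE (z₁ + z₂) (z₁ - z₂) := by
    ext i
    simp [mulE_apply, PiLp.sub_apply, PiLp.add_apply]
    ring
  have hA : ‖a₁ - a₂‖ ≤ 2 * L * ‖z₁ - z₂‖ := by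
    calc ‖a₁ - a₂‖ ≤ L * ‖mulE z₁ z₁ - mulE z₂ z₂‖ := hL _ _
    _ = L * ‖mulE (z₁ + z₂) (z₁ - z₂)‖ := by rw [hsqd]
    _ ≤ L * (‖z₁ + z₂‖ * ‖z₁ - z₂‖) :=
        mul_le_mul_of_nonneg_left (mul_norm_le n _ _) hL0
    _ ≤ L * (2 * ‖z₁ - z₂‖) := by
        apply mul_le_mul_of_nonneg_left _ hL0
        apply mul_le_mul_of_nonneg_right _ (norm_nonneg _)
        calc ‖z₁ + z₂‖ ≤ ‖z₁‖ + ‖z₂‖ := norm_add_le _ _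
        _ = 2 := by rw [h1, h2]; norm_num
    _ = 2 * L * ‖z₁ - z₂‖ := by ring
  rw [hG1, hG2, hkey]
  calc ‖(2:ℝ) • mulE z₁ (a₁ - a₂) + (2:ℝ) • mulE (z₁ - z₂) a₂‖
      ≤ ‖(2:ℝ) • mulE z₁ (a₁ - a₂)‖ + ‖(2:ℝ) • mulE (z₁ - z₂) a₂‖ := norm_add_le _ _
    _ = 2 * ‖mulE z₁ (a₁ - a₂)‖ + 2 * ‖mulE (z₁ - z₂) a₂‖ := by
        rw [norm_smul, norm_smul]; norm_num
    _ ≤ 2 * (‖z₁‖ * ‖a₁ - a₂‖) + 2 * (‖z₁ - z₂‖ * ‖a₂‖) := by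
        have := mul_norm_le n z₁ (a₁ - a₂)
        have := mul_norm_le n (z₁ - z₂) a₂
        linarith
    _ ≤ 2 * (1 * (2 * L * ‖z₁ - z₂‖)) + 2 * (‖z₁ - z₂‖ * M) := by
        have h3 : ‖z₁‖ * ‖a₁ - a₂‖ ≤ 1 * (2 * L * ‖z₁ - z₂‖) := by
          rw [h1]
          have := hA
          linarith
        have h4 : ‖z₁ - z₂‖ * ‖a₂‖ ≤ ‖z₁ - z₂‖ * M :=
          mul_le_mul_of_nonneg_left (hM _) (norm_nonneg _)
        linarith
    _ = (4 * L + 2 * M) * ‖z₁ - z₂‖ := by ring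
end
end

section
/- Let x* ∈ Δₙ be a first-order KKT point of minimizing a C¹ function f over the standard simplex, with multipliers λ* ∈ ℝ and β* ∈ ℝⁿ satisfying ∇f(x*) = λ*1 + β*, x* ≥ 0, β* ≥ 0, x* ⊙ β* = 0, 1ᵀx* = 1. Then every z* with z* ⊙ z* = x* satisfies the first-order KKT conditions of the sphere-constrained problem min_{‖z‖₂=1} f(z⊙z), namely ∇f(z*⊙z*) ⊙ z* = λ* z* and ‖z*‖₂² = 1. -/
theorem stmt_8 (n : ℕ) (f : EuclideanSpace ℝ (Fin n) → ℝ)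
    (hf : ContDiff ℝ 1 f)
    (x : EuclideanSpace ℝ (Fin n)) (lam : ℝ) (beta : EuclideanSpace ℝ (Fin n))
    (hgrad : ∀ i, gradient f x i = lam + beta i)
    (hx : ∀ i, 0 ≤ x i)
    (hbeta : ∀ i, 0 ≤ beta i)
    (hcomp : ∀ i, x i * beta i = 0)
    (hsum : ∑ i, x i = 1) :
    ∀ z : EuclideanSpace ℝ (Fin n), (∀ i, z i * z i = x i) →
      (∀ i, gradient f (WithLp.toLp 2 (fun i => z i * z i) : EuclideanSpace ℝ (Fin n)) i * z i = lam * z i)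
        ∧ ‖z‖ ^ 2 = 1 := by
  intro z hz
  have hxz : (WithLp.toLp 2 (fun i => z i * z i) : EuclideanSpace ℝ (Fin n)) = x := by ext i; exact hz i
  constructor
  · intro i
    rw [hxz, hgrad i]
    have hbz : beta i * z i = 0 := by
      rcases eq_or_ne (z i) 0 with h | h
      · simp [h]
      · have hxi : x i ≠ 0 := by
          rw [← hz i]; exact mul_ne_zero h h
        have : beta i = 0 := by
          rcases mul_eq_zero.mp (hcomp i) with h' | h'
          · exact absurd h' hxi
          · exact h'
        simp [this]
    ring_nf
    linarith [hbz]
  · have : ‖z‖ ^ 2 = ∑ i, z i * z i := by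
      rw [EuclideanSpace.norm_eq, Real.sq_sqrt (by positivity)]
      congr 1; ext i; rw [Real.norm_eq_abs, sq_abs, sq]
    rw [this]
    simp_rw [hz]
    exact hsum
end

section
/- Let f : ℝⁿ → ℝ be C¹ and suppose z* with ‖z*‖₂ = 1 satisfies ∇f(z*⊙z*) ⊙ z* = λ z* for some λ ∈ ℝ, and for every unit vector d orthogonal to z*, 2⟨∇f(z*⊙z*), d⊙d⟩ − 2λ‖d‖² + 4(z*⊙d)ᵀ∇²f(z*⊙z*)(z*⊙d) ≥ 0. Then x* := z* ⊙ z* satisfies the first-order KKT conditions for minimizing f over the standard simplex; in particular, [∇f(x*)]ₖ = λ whenever [x*]ₖ ≠ 0 and [∇f(x*)]ₖ ≥ λ whenever [x*]ₖ = 0. -/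
theorem stmt_9 (n : ℕ) (f : EuclideanSpace ℝ (Fin n) → ℝ)
    (hf : ContDiff ℝ 2 f)
    (z : EuclideanSpace ℝ (Fin n)) (lam : ℝ)
    (hz : ‖z‖ = 1)
    (hfo : ∀ i, gradient f (WithLp.toLp 2 (fun i => z i * z i) : EuclideanSpace ℝ (Fin n)) i * z i = lam * z i)
    (hso : ∀ d : EuclideanSpace ℝ (Fin n), ‖d‖ = 1 → (inner ℝ d z : ℝ) = 0 →
      0 ≤ 2 * ∑ i, gradient f (WithLp.toLp 2 (fun i => z i * z i) : EuclideanSpace ℝ (Fin n)) i * (d i * d i)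
            - 2 * lam * ‖d‖ ^ 2
            + 4 * iteratedFDeriv ℝ 2 f (WithLp.toLp 2 (fun i => z i * z i) : EuclideanSpace ℝ (Fin n))
                ![(WithLp.toLp 2 (fun i => z i * d i) : EuclideanSpace ℝ (Fin n)),
                  (WithLp.toLp 2 (fun i => z i * d i) : EuclideanSpace ℝ (Fin n))]) :
    (∀ i, 0 ≤ z i * z i) ∧ (∑ i, z i * z i = 1) ∧
    (∀ k, z k * z k ≠ 0 →
        gradient f (WithLp.toLp 2 (fun i => z i * z i) : EuclideanSpace ℝ (Fin n)) k = lam) ∧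
    (∀ k, z k * z k = 0 →
        lam ≤ gradient f (WithLp.toLp 2 (fun i => z i * z i) : EuclideanSpace ℝ (Fin n)) k) := by
  refine ⟨fun i => mul_self_nonneg _, ?_, ?_, ?_⟩
  · have h : (inner ℝ z z : ℝ) = 1 := by
      rw [real_inner_self_eq_norm_sq, hz]; norm_num
    rw [← h, PiLp.inner_apply]
    simp [RCLike.inner_apply, pow_two]
  · intro k hk
    have hzk : z k ≠ 0 := fun h => hk (by rw [h]; ring)
    have := hfo k
    have := mul_right_cancel₀ hzk this
    exact this
  · intro k hk
    have hzk : z k = 0 := by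
      rcases mul_self_eq_zero.mp hk with h; exact h
    set d : EuclideanSpace ℝ (Fin n) := EuclideanSpace.single k 1 with hd
    have hdn : ‖d‖ = 1 := by simp [hd]
    have hdi : ∀ i, d i = if i = k then 1 else 0 := by
      intro i; simp [hd, EuclideanSpace.single_apply]
    have hinner : (inner ℝ d z : ℝ) = 0 := by
      rw [hd, EuclideanSpace.inner_single_left]
      simp [hzk]
    have hzero : (WithLp.toLp 2 (fun i => z i * d i) : EuclideanSpace ℝ (Fin n)) = 0 := by
      ext i
      by_cases h : i = k
      · subst h; simp [hzk]
      · simp [hdi i, h]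
    have key := hso d hdn hinner
    rw [hzero] at key
    have hmap : iteratedFDeriv ℝ 2 f (WithLp.toLp 2 (fun i => z i * z i) : EuclideanSpace ℝ (Fin n))
        ![(0 : EuclideanSpace ℝ (Fin n)), 0] = 0 := by
      have : (![(0 : EuclideanSpace ℝ (Fin n)), 0]) 0 = 0 := rfl
      exact (iteratedFDeriv ℝ 2 f _).map_coord_zero 0 this
    rw [hmap] at key
    have hsum : ∑ i, gradient f (WithLp.toLp 2 (fun i => z i * z i) : EuclideanSpace ℝ (Fin n)) i * (d i * d i)
        = gradient f (WithLp.toLp 2 (fun i => z i * z i) : EuclideanSpace ℝ (Fin n)) k := by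
      rw [Finset.sum_eq_single k]
      · simp [hdi k]
      · intro i _ hik; simp [hdi i, hik]
      · intro h; exact absurd (Finset.mem_univ k) h
    rw [hsum, hdn] at key
    nlinarith [key]
end

section
/- Suppose f is convex and differentiable and z* is a point of the unit sphere satisfying the first-order KKT conditions of min_{‖z‖₂=1} f(z⊙z) (i.e., ∇f(z*⊙z*) ⊙ z* = λ z* for some λ), together with the second-order condition that for all d ⊥ z*: 2⟨∇f(z*⊙z*), d⊙d⟩ − 2λ‖d‖² + 4(z*⊙d)ᵀ∇²f(z*⊙z*)(z*⊙d) ≥ 0. Then x* = z* ⊙ z* is a global minimizer of f over the standard simplex Δₙ. -/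
open scoped RealInnerProductSpace

lemma grad_ineq {n : ℕ} {f : EuclideanSpace ℝ (Fin n) → ℝ}
    (hconv : ConvexOn ℝ Set.univ f) (hd : Differentiable ℝ f)
    (x y : EuclideanSpace ℝ (Fin n)) :
    f x + ⟪gradient f x, y - x⟫ ≤ f y := by
  set v := y - x with hv
  -- the curve
  have hγ : HasDerivAt (fun t : ℝ => t • v + x) v 0 := by
    simpa using ((hasDerivAt_id (0:ℝ)).smul_const v).add_const x
  have hγ0 : (fun t : ℝ => t • v + x) 0 = x := by simp
  have hfdx : HasFDerivAt f (InnerProductSpace.toDual ℝ _ (gradient f x)) x :=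
    hasGradientAt_iff_hasFDerivAt.mp (hd x).hasGradientAt
  have hderiv : HasDerivAt (fun t : ℝ => f (t • v + x)) ⟪gradient f x, v⟫ 0 := by
    have := (hγ0 ▸ hfdx).comp_hasDerivAt 0 hγ
    simpa [Function.comp_def, InnerProductSpace.toDual_apply_apply] using this
  have hφ : ConvexOn ℝ Set.univ (fun t : ℝ => f (t • v + x)) := by
    have := hconv.comp_affineMap
      (AffineMap.lineMap x y : ℝ →ᵃ[ℝ] EuclideanSpace ℝ (Fin n))
    have heq : (f ∘ (AffineMap.lineMap x y : ℝ →ᵃ[ℝ] EuclideanSpace ℝ (Fin n)))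
        = fun t : ℝ => f (t • v + x) := by
      funext t
      simp [AffineMap.lineMap_apply, hv]
    simpa [heq] using this
  have hs := hφ.le_slope_of_hasDerivAt (Set.mem_univ (0:ℝ)) (Set.mem_univ (1:ℝ))
    zero_lt_one hderiv
  rw [slope_def_field] at hs
  have h1 : (1:ℝ) • v + x = y := by simp [hv]
  rw [h1] at hs
  simp only [zero_smul, zero_add, hγ0] at hs
  -- hs : ⟪gradient f x, v⟫ ≤ (f y - f x) / (1 - 0)
  have : ⟪gradient f x, v⟫ ≤ f y - f x := by
    simpa using hs
  linarith

theorem stmt_12 (n : ℕ) (f : EuclideanSpace ℝ (Fin n) → ℝ)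
    (hconv : ConvexOn ℝ Set.univ f)
    (hf : ContDiff ℝ 2 f)
    (z : EuclideanSpace ℝ (Fin n)) (lam : ℝ)
    (hz : ‖z‖ = 1)
    (hfo : ∀ i, gradient f (WithLp.toLp 2 (fun i => z i * z i) : EuclideanSpace ℝ (Fin n)) i * z i = lam * z i)
    (hso : ∀ d : EuclideanSpace ℝ (Fin n), (inner ℝ d z : ℝ) = 0 →
      0 ≤ 2 * ∑ i, gradient f (WithLp.toLp 2 (fun i => z i * z i) : EuclideanSpace ℝ (Fin n)) i * (d i * d i)
            - 2 * lam * ‖d‖ ^ 2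
            + 4 * iteratedFDeriv ℝ 2 f (WithLp.toLp 2 (fun i => z i * z i) : EuclideanSpace ℝ (Fin n))
                ![(WithLp.toLp 2 (fun i => z i * d i) : EuclideanSpace ℝ (Fin n)),
                  (WithLp.toLp 2 (fun i => z i * d i) : EuclideanSpace ℝ (Fin n))]) :
    (∀ i, 0 ≤ z i * z i) ∧ (∑ i, z i * z i = 1) ∧
    ∀ y : EuclideanSpace ℝ (Fin n), (∀ i, 0 ≤ y i) → ∑ i, y i = 1 →
      f (WithLp.toLp 2 (fun i => z i * z i) : EuclideanSpace ℝ (Fin n)) ≤ f y := by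
  set x : EuclideanSpace ℝ (Fin n) := WithLp.toLp 2 (fun i => z i * z i) with hx
  set g : EuclideanSpace ℝ (Fin n) := gradient f x with hg
  have hsum : ∑ i, z i * z i = 1 := by
    have : ⟪z, z⟫ = (1:ℝ) := by
      rw [real_inner_self_eq_norm_sq, hz]; norm_num
    simpa only [PiLp.inner_apply, RCLike.inner_apply, conj_trivial] using this
  refine ⟨fun i => mul_self_nonneg _, hsum, ?_⟩
  intro y hy hysum
  -- key: g i ≥ lam for all i
  have hkey : ∀ i, lam ≤ g i := by
    intro i
    by_cases hzi : z i = 0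
    · -- use second order condition with d = e_i
      set d : EuclideanSpace ℝ (Fin n) := EuclideanSpace.single i 1 with hd
      have hdz : (inner ℝ d z : ℝ) = 0 := by
        rw [hd, EuclideanSpace.inner_single_left]
        simp [hzi]
      have h := hso d hdz
      have hv0 : (WithLp.toLp 2 (fun j => z j * d j) : EuclideanSpace ℝ (Fin n)) = 0 := by
        ext j
        by_cases hji : j = i
        · subst hji; simp [hd, hzi]
        · simp [hd, EuclideanSpace.single_apply, hji]
      rw [hv0] at h
      have hit : iteratedFDeriv ℝ 2 f x
          ![(0 : EuclideanSpace ℝ (Fin n)), (0 : EuclideanSpace ℝ (Fin n))] = 0 :=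
        (iteratedFDeriv ℝ 2 f x).map_coord_zero (0 : Fin 2) (by simp)
      rw [hit] at h
      have hsumd : ∑ j, g j * (d j * d j) = g i := by
        rw [hd]
        rw [Finset.sum_eq_single i]
        · simp
        · intro j _ hji; simp [EuclideanSpace.single_apply, hji]
        · intro hni; exact absurd (Finset.mem_univ i) hni
      have hnd : ‖d‖ = 1 := by simp [hd]
      rw [hsumd, hnd] at h
      nlinarith [h]
    · have := hfo i
      have : g i = lam := by
        field_simp at this
        linarith [this]
      linarith [this.ge, this.le]
  -- inner product computations
  have hgx : ∑ i, g i * x i = lam := by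
    have : ∀ i, g i * x i = lam * (z i * z i) := by
      intro i
      have := hfo i
      simp only [hx]
      calc g i * (z i * z i) = (g i * z i) * z i := by ring
        _ = (lam * z i) * z i := by rw [this]
        _ = lam * (z i * z i) := by ring
    rw [Finset.sum_congr rfl fun i _ => this i, ← Finset.mul_sum, hsum, mul_one]
  have hgy : lam ≤ ∑ i, g i * y i := by
    calc lam = ∑ i, lam * y i := by rw [← Finset.mul_sum, hysum, mul_one]
      _ ≤ ∑ i, g i * y i :=
        Finset.sum_le_sum fun i _ => mul_le_mul_of_nonneg_right (hkey i) (hy i)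
  have hdf : Differentiable ℝ f := hf.differentiable (by norm_num)
  have hmain := grad_ineq hconv hdf x y
  have hinner : ⟪gradient f x, y - x⟫ = ∑ i, g i * y i - ∑ i, g i * x i := by
    simp only [PiLp.inner_apply, RCLike.inner_apply, starRingEnd_apply, star_trivial]
    rw [← Finset.sum_sub_distrib]
    congr 1
    funext i
    have : (y - x) i = y i - x i := by simp
    rw [← hg, this]
    ring
  rw [hinner, hgx] at hmain
  linarith
end

section
/- Let f : ℝⁿ → ℝ be continuous and g(z) := f(z ⊙ z). If x* = z* ⊙ z* is a local minimizer of f on the standard simplex Δₙ, then z* is a local minimizer of g on the unit sphere. Specifically, if f(x*) ≤ f(x) for all x ∈ Δₙ with |xᵢ − x*ᵢ| < ε for all i, then g(z*) ≤ g(z) for all z on the unit sphere with |zᵢ − z*ᵢ| < ε/2 for all i. -/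
lemma sum_sq_eq_one {n : ℕ} (z : EuclideanSpace ℝ (Fin n)) (hz : ‖z‖ = 1) :
    ∑ i, z i * z i = 1 := by
  have := EuclideanSpace.norm_eq z
  rw [hz] at this
  have h : ∑ i, ‖z i‖ ^ 2 = 1 := by
    have h0 : (0:ℝ) ≤ ∑ i, ‖z i‖ ^ 2 := Finset.sum_nonneg fun i _ => sq_nonneg _
    nlinarith [Real.sq_sqrt h0, Real.sqrt_nonneg (∑ i, ‖z i‖ ^ 2)]
  calc ∑ i, z i * z i = ∑ i, ‖z i‖ ^ 2 := by
        refine Finset.sum_congr rfl fun i _ => ?_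
        rw [Real.norm_eq_abs, sq_abs]; ring
    _ = 1 := h

lemma abs_le_one {n : ℕ} (z : EuclideanSpace ℝ (Fin n)) (hz : ‖z‖ = 1) (i : Fin n) :
    |z i| ≤ 1 := by
  have h := sum_sq_eq_one z hz
  have : z i * z i ≤ ∑ j, z j * z j :=
    Finset.single_le_sum (f := fun j => z j * z j) (fun j _ => mul_self_nonneg _)
      (Finset.mem_univ i)
  nlinarith [abs_nonneg (z i), sq_abs (z i)]

theorem stmt_13 (n : ℕ) (f : EuclideanSpace ℝ (Fin n) → ℝ)
    (hf : Continuous f)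
    (g : EuclideanSpace ℝ (Fin n) → ℝ)
    (hg : ∀ z, g z = f (WithLp.toLp 2 (fun i => z i * z i) : EuclideanSpace ℝ (Fin n)))
    (zs : EuclideanSpace ℝ (Fin n)) (hzs : ‖zs‖ = 1)
    (ε : ℝ) (hε : 0 < ε)
    (hmin : ∀ x : EuclideanSpace ℝ (Fin n), (∀ i, 0 ≤ x i) → ∑ i, x i = 1 →
      (∀ i, |x i - zs i * zs i| < ε) →
      f (WithLp.toLp 2 (fun i => zs i * zs i) : EuclideanSpace ℝ (Fin n)) ≤ f x) :
    ∀ z : EuclideanSpace ℝ (Fin n), ‖z‖ = 1 → (∀ i, |z i - zs i| < ε / 2) →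
      g zs ≤ g z := by
  intro z hz hclose
  rw [hg, hg]
  apply hmin
  · intro i; exact mul_self_nonneg _
  · exact sum_sq_eq_one z hz
  · intro i
    have h1 : |z i| ≤ 1 := abs_le_one z hz i
    have h2 : |zs i| ≤ 1 := abs_le_one zs hzs i
    have h3 := hclose i
    show |z i * z i - zs i * zs i| < ε
    have : z i * z i - zs i * zs i = (z i - zs i) * (z i + zs i) := by ring
    rw [this, abs_mul]
    have h4 : |z i + zs i| ≤ 2 := (abs_add_le _ _).trans (by linarith)
    calc |z i - zs i| * |z i + zs i| ≤ |z i - zs i| * 2 :=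
          mul_le_mul_of_nonneg_left h4 (abs_nonneg _)
      _ < (ε/2) * 2 := by linarith
      _ = ε := by ring
end
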